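/- Let δ > 0 and let g : [0,δ) → ℝ be continuous with g(0) = 0. Suppose that |g(r)| ≤ (1/r)·∫₀^r |g(t)| dt for every r ∈ (0,δ). Then g(r) = 0 for every r ∈ [0,δ). (Proof idea: h(r) := ∫₀^r |g(t)| dt satisfies h'(r) ≤ h(r)/r, so r ↦ h(r)/r is nonincreasing on (0,δ); since h(t)/t → |g(0)| = 0 as t → 0⁺, it follows that h ≡ 0.) -/

import Mathlib

open Set intervalIntegral

/-- Gronwall-type vanishing lemma: if `g` is continuous on `[0,δ)`, `g(0)=0` and
`|g(r)| ≤ (1/r)∫₀ʳ |g(t)| dt` for all `r ∈ (0,δ)`, then `g ≡ 0` on `[0,δ)`. -/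
theorem gronwall_vanishing_lemma
    (δ : ℝ) (hδ : 0 < δ) (g : ℝ → ℝ)
    (hg : ContinuousOn g (Ico 0 δ))
    (hg0 : g 0 = 0)
    (hbound : ∀ r, 0 < r → r < δ → |g r| ≤ (1 / r) * ∫ t in (0 : ℝ)..r, |g t|) :
    ∀ r, 0 ≤ r → r < δ → g r = 0 := by
  set c : ℝ → ℝ := fun t => |g t| with hc_def
  have hc : ContinuousOn c (Ico 0 δ) := hg.abs
  set h : ℝ → ℝ := fun s => ∫ t in (0:ℝ)..s, c t with hh_def
  have hint : ∀ s, 0 ≤ s → s < δ → IntervalIntegrable c MeasureTheory.volume 0 s := by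
    intro s hs0 hsδ
    apply (hc.mono ?_).intervalIntegrable
    rw [uIcc_of_le hs0]
    exact fun t ht => ⟨ht.1, lt_of_le_of_lt ht.2 hsδ⟩
  have hnonneg : ∀ s, 0 ≤ s → 0 ≤ h s := fun s hs0 =>
    intervalIntegral.integral_nonneg hs0 (fun t _ => abs_nonneg _)
  have hderiv : ∀ s ∈ Ioo (0:ℝ) δ, HasDerivAt h (c s) s := by
    intro s hs
    have hcIoo : ContinuousOn c (Ioo 0 δ) := hc.mono Ioo_subset_Ico_self
    exact intervalIntegral.integral_hasDerivAt_right (hint s hs.1.le hs.2)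
      (hcIoo.stronglyMeasurableAtFilter isOpen_Ioo s hs)
      (hcIoo.continuousAt (isOpen_Ioo.mem_nhds hs))
  intro r hr0 hrδ
  rcases eq_or_lt_of_le hr0 with rfl | hr
  · exact hg0
  · have key : h r ≤ 0 := by
      have hε : ∀ ε : ℝ, 0 < ε → h r ≤ ε * r := by
        intro ε hεpos
        obtain ⟨d, hd, hball⟩ := Metric.continuousWithinAt_iff.mp (hg 0 ⟨le_refl 0, hδ⟩) ε hεpos
        set a := min (d/2) r with ha_def
        have ha0 : 0 < a := lt_min (by linarith) hr
        have har : a ≤ r := min_le_right _ _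
        have haδ : a < δ := lt_of_le_of_lt har hrδ
        have hga : ∀ t ∈ Icc (0:ℝ) a, c t ≤ ε := by
          intro t ht
          have hdist : dist t 0 < d := by
            rw [Real.dist_eq, sub_zero, abs_of_nonneg ht.1]
            calc t ≤ a := ht.2
              _ ≤ d/2 := min_le_left _ _
              _ < d := by linarith
          have := hball ⟨ht.1, lt_of_le_of_lt ht.2 haδ⟩ hdist
          rw [hg0, dist_zero_right, Real.norm_eq_abs] at this
          exact le_of_lt this
        have hha : h a ≤ ε * a := by
          calc h a ≤ ∫ _t in (0:ℝ)..a, ε := by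
                apply intervalIntegral.integral_mono_on ha0.le (hint a ha0.le haδ)
                  intervalIntegrable_const
                exact fun t ht => hga t ht
            _ = ε * a := by simp [mul_comm]
        have hanti : AntitoneOn (fun t => h t / t) (Icc a r) := by
          apply antitoneOn_of_deriv_nonpos (convex_Icc a r)
          · apply ContinuousOn.div
            · intro x hx
              have hx' : x ∈ Ioo (0:ℝ) δ :=
                ⟨lt_of_lt_of_le ha0 hx.1, lt_of_le_of_lt hx.2 hrδ⟩
              exact ((hderiv x hx').continuousAt).continuousWithinAt
            · exact continuousOn_id
            · intro x hx; exact ne_of_gt (lt_of_lt_of_le ha0 hx.1)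
          · intro x hx
            rw [interior_Icc] at hx
            have hx' : x ∈ Ioo (0:ℝ) δ := ⟨lt_trans ha0 hx.1, lt_trans hx.2 hrδ⟩
            exact (((hderiv x hx').div (hasDerivAt_id x)
              (ne_of_gt hx'.1)).differentiableAt).differentiableWithinAt
          · intro x hx
            rw [interior_Icc] at hx
            have hx' : x ∈ Ioo (0:ℝ) δ := ⟨lt_trans ha0 hx.1, lt_trans hx.2 hrδ⟩
            have hx0 : (0:ℝ) < x := hx'.1
            have hd' := (hderiv x hx').div (hasDerivAt_id x) (ne_of_gt hx0)
            simp only [id_eq] at hd'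
            rw [show (fun t => h t / t) = h / id from rfl, hd'.deriv]
            have hb : c x ≤ (1 / x) * h x := hbound x hx'.1 hx'.2
            have hle : c x * x ≤ h x := by
              calc c x * x ≤ (1/x) * h x * x := by nlinarith
                _ = h x := by field_simp
            apply div_nonpos_of_nonpos_of_nonneg
            · linarith
            · positivity
        have hmono := hanti ⟨le_refl a, har⟩ ⟨har, le_refl r⟩ har
        have h2 : h a / a ≤ ε := by rw [div_le_iff₀ ha0]; linarith
        have h3 : h r / r ≤ ε := le_trans hmono h2
        rw [div_le_iff₀ hr] at h3
        linarith
      by_contra hc'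
      push_neg at hc'
      have := hε (h r / (2*r)) (by positivity)
      have heq : h r / (2*r) * r = h r / 2 := by field_simp
      rw [heq] at this
      linarith
    have hb := hbound r hr hrδ
    have hn := hnonneg r hr0
    have habs : |g r| ≤ 0 := by
      calc |g r| ≤ (1/r) * h r := hb
        _ ≤ 0 := by
            have h1r : 0 < 1/r := by positivity
            nlinarith
    exact abs_eq_zero.mp (le_antisymm habs (abs_nonneg _))
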